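/- Joint upper bound: With X, Y, u as above, let g_1,...,g_c: Φ → [0,1] each vanish on subsets not containing u and satisfy Σ_{l=1}^{c} g_l(Z) ≤ N' for all Z. Let p̄* be an integer multiple of 1/C(n,s) with (1/N')·Σ_l E[g_l(X)] ≤ p̄* ≤ s/n. Then min_{l} E[g_l(Y)] ≤ (N'/c)·(p̄*·C(n,s)/C(n',s) + s/n' − (s/n)·C(n,s)/C(n',s)). -/

import Mathlib

open Finset

lemma count_mem_powersetCard {α : Type*} [DecidableEq α] (V : Finset α) (u : α)
    (hu : u ∈ V) (s : ℕ) (hs : 1 ≤ s) :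
    ((V.powersetCard s).filter (fun Z => u ∈ Z)).card = (V.card - 1).choose (s - 1) := by
  have h1 : (V.powersetCard s).filter (fun Z => u ∉ Z) = (V.erase u).powersetCard s := by
    ext Z
    simp only [Finset.mem_filter, Finset.mem_powersetCard, Finset.subset_erase]
    tauto
  have h2 := Finset.card_filter_add_card_filter_not
    (s := V.powersetCard s) (p := fun Z => u ∈ Z)
  have hV : 1 ≤ V.card := Finset.card_pos.2 ⟨u, hu⟩
  rw [h1, Finset.card_powersetCard, Finset.card_powersetCard, Finset.card_erase_of_mem hu] at h2
  obtain ⟨m, hm⟩ : ∃ m, V.card = m + 1 := ⟨V.card - 1, by omega⟩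
  obtain ⟨t, ht⟩ : ∃ t, s = t + 1 := ⟨s - 1, by omega⟩
  rw [hm, ht] at h2 ⊢
  simp only [Nat.add_sub_cancel] at h2 ⊢
  have := Nat.choose_succ_succ m t
  simp only [Nat.succ_eq_add_one] at this
  omega

lemma succ_mul_aux (m s : ℕ) (hs : 1 ≤ s) (hm : 1 ≤ m) :
    s * m.choose s = m * (m - 1).choose (s - 1) := by
  obtain ⟨a, rfl⟩ : ∃ a, m = a + 1 := ⟨m - 1, by omega⟩
  obtain ⟨t, rfl⟩ : ∃ t, s = t + 1 := ⟨s - 1, by omega⟩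
  simp only [Nat.add_sub_cancel]
  rw [Nat.mul_comm]
  exact (Nat.add_one_mul_choose_eq a t).symm

/-- Joint upper bound on poisoned item probabilities. `g₁,…,g_c : Φ → [0,1]` each vanish on
subsets not containing `u` and satisfy `Σ_l g_l(Z) ≤ N'` pointwise. If `p̄*` is an integer
multiple of `1/C(n,s)` with `(1/N')·Σ_l E[g_l(X)] ≤ p̄* ≤ s/n`, then
`min_l E[g_l(Y)] ≤ (N'/c)·(p̄*·C(n,s)/C(n',s) + s/n' − (s/n)·C(n,s)/C(n',s))`. -/
theorem poisoned_prob_joint_upper_bound {α : Type*} [DecidableEq α]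
    (U U' : Finset α) (hUU' : U ⊆ U') (n n' e s : ℕ) (hn : U.card = n)
    (hn' : U'.card = n') (hne : n' = n + e) (hs : 1 ≤ s) (hsn : s ≤ n)
    (u : α) (hu : u ∈ U)
    (c : ℕ) (hc : 1 ≤ c) (g : Fin c → Finset α → ℝ)
    (hg0 : ∀ l Z, 0 ≤ g l Z) (hg1 : ∀ l Z, g l Z ≤ 1)
    (hgu : ∀ l Z, u ∉ Z → g l Z = 0)
    (N' : ℕ) (hN' : 1 ≤ N') (hsum : ∀ Z, ∑ l, g l Z ≤ (N' : ℝ))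
    (pbar : ℝ) (hmult : ∃ k : ℕ, pbar = (k : ℝ) / (n.choose s : ℝ))
    (hge : (1 / (N' : ℝ)) * ∑ l, (∑ Z ∈ U.powersetCard s, g l Z) / (n.choose s : ℝ) ≤ pbar)
    (hsn' : pbar ≤ (s : ℝ) / (n : ℝ)) :
    (Finset.univ.inf' (Finset.univ_nonempty_iff.2 ⟨⟨0, hc⟩⟩)
        (fun l => (∑ Z ∈ U'.powersetCard s, g l Z) / (n'.choose s : ℝ)))
      ≤ ((N' : ℝ) / (c : ℝ)) *
          (pbar * ((n.choose s : ℝ) / (n'.choose s : ℝ))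
            + (s : ℝ) / (n' : ℝ)
            - ((s : ℝ) / (n : ℝ)) * ((n.choose s : ℝ) / (n'.choose s : ℝ))) := by
  have hnn' : n ≤ n' := by omega
  have hsnn' : s ≤ n' := le_trans hsn hnn'
  have hn1 : 1 ≤ n := le_trans hs hsn
  have hn'1 : 1 ≤ n' := le_trans hn1 hnn'
  have hCpos : (0:ℝ) < (n.choose s : ℝ) := by exact_mod_cast Nat.choose_pos hsn
  have hC'pos : (0:ℝ) < (n'.choose s : ℝ) := by exact_mod_cast Nat.choose_pos hsnn'
  have hcpos : (0:ℝ) < c := by exact_mod_cast hc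
  have hN'pos : (0:ℝ) < N' := by exact_mod_cast hN'
  set A := U.powersetCard s with hA
  set B := U'.powersetCard s with hB
  have hAB : A ⊆ B := Finset.powersetCard_mono hUU'
  set G : Finset α → ℝ := fun Z => ∑ l, g l Z with hG
  -- bound on sum over A
  have hsumA : ∑ Z ∈ A, G Z ≤ (N' : ℝ) * pbar * (n.choose s : ℝ) := by
    have h1 : ∑ l, (∑ Z ∈ A, g l Z) / (n.choose s : ℝ)
        = (∑ Z ∈ A, G Z) / (n.choose s : ℝ) := by
      rw [← Finset.sum_div, Finset.sum_comm]
    rw [h1, one_div, inv_mul_eq_div, div_div] at hge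
    have h2 := (div_le_iff₀ (by positivity)).mp hge
    nlinarith [h2]
  -- counting
  set K1 := (n' - 1).choose (s - 1) with hK1
  set K2 := (n - 1).choose (s - 1) with hK2
  have hK21 : K2 ≤ K1 := Nat.choose_le_choose (s - 1) (by omega)
  have hcardBA : ((B \ A).filter (fun Z => u ∈ Z)).card = K1 - K2 := by
    have hfs : (B \ A).filter (fun Z => u ∈ Z)
        = B.filter (fun Z => u ∈ Z) \ A.filter (fun Z => u ∈ Z) := by
      ext Z
      simp only [Finset.mem_filter, Finset.mem_sdiff]
      tauto
    rw [hfs, Finset.card_sdiff_of_subset (Finset.filter_subset_filter _ hAB)]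
    rw [hA, hB, count_mem_powersetCard U' u (hUU' hu) s hs,
      count_mem_powersetCard U u hu s hs, hn, hn']
  -- bound on sum over B \ A
  have hsumBA : ∑ Z ∈ B \ A, G Z ≤ (N' : ℝ) * ((K1 : ℝ) - (K2 : ℝ)) := by
    have hsplit := Finset.sum_filter_add_sum_filter_not (B \ A) (fun Z => u ∈ Z) G
    have hzero : ∑ Z ∈ (B \ A).filter (fun Z => ¬ u ∈ Z), G Z = 0 := by
      apply Finset.sum_eq_zero
      intro Z hZ
      rw [Finset.mem_filter] at hZ
      exact Finset.sum_eq_zero fun l _ => hgu l Z hZ.2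
    have hbound : ∑ Z ∈ (B \ A).filter (fun Z => u ∈ Z), G Z
        ≤ (((B \ A).filter (fun Z => u ∈ Z)).card : ℝ) * (N' : ℝ) := by
      have := Finset.sum_le_card_nsmul ((B \ A).filter (fun Z => u ∈ Z)) G ((N' : ℝ))
        (fun Z _ => hsum Z)
      simpa [nsmul_eq_mul] using this
    rw [← hsplit, hzero, add_zero]
    calc ∑ Z ∈ (B \ A).filter (fun Z => u ∈ Z), G Z
        ≤ (((B \ A).filter (fun Z => u ∈ Z)).card : ℝ) * (N' : ℝ) := hbound
      _ = (N' : ℝ) * ((K1 : ℝ) - (K2 : ℝ)) := by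
          rw [hcardBA, Nat.cast_sub hK21]; ring
  -- total sum
  have hsumB : ∑ Z ∈ B, G Z
      ≤ (N' : ℝ) * pbar * (n.choose s : ℝ) + (N' : ℝ) * ((K1 : ℝ) - (K2 : ℝ)) := by
    rw [← Finset.sum_sdiff hAB]
    linarith
  -- min ≤ average
  have hne' : (Finset.univ : Finset (Fin c)).Nonempty := Finset.univ_nonempty_iff.2 ⟨⟨0, hc⟩⟩
  set m := Finset.univ.inf' hne' (fun l => (∑ Z ∈ B, g l Z) / (n'.choose s : ℝ)) with hm
  have hminavg : m * c ≤ (∑ Z ∈ B, G Z) / (n'.choose s : ℝ) := by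
    have h1 : ∑ l : Fin c, (∑ Z ∈ B, g l Z) / (n'.choose s : ℝ)
        = (∑ Z ∈ B, G Z) / (n'.choose s : ℝ) := by
      rw [← Finset.sum_div, Finset.sum_comm]
    rw [← h1]
    calc m * c = ∑ _l : Fin c, m := by
          simp [Finset.sum_const, Finset.card_univ, mul_comm]
      _ ≤ ∑ l : Fin c, (∑ Z ∈ B, g l Z) / (n'.choose s : ℝ) :=
          Finset.sum_le_sum fun l _ => Finset.inf'_le _ (Finset.mem_univ l)
  -- identities
  have hid1 : (s : ℝ) * (n'.choose s : ℝ) = (n' : ℝ) * (K1 : ℝ) := by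
    exact_mod_cast congrArg (Nat.cast : ℕ → ℝ) (succ_mul_aux n' s hs hn'1)
  have hid2 : (s : ℝ) * (n.choose s : ℝ) = (n : ℝ) * (K2 : ℝ) := by
    exact_mod_cast congrArg (Nat.cast : ℕ → ℝ) (succ_mul_aux n s hs hn1)
  have hnpos : (0:ℝ) < n := by exact_mod_cast hn1
  have hn'pos : (0:ℝ) < n' := by exact_mod_cast hn'1
  -- final
  have hrhs : ((N' : ℝ) / (c : ℝ)) *
      (pbar * ((n.choose s : ℝ) / (n'.choose s : ℝ)) + (s : ℝ) / (n' : ℝ)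
        - ((s : ℝ) / (n : ℝ)) * ((n.choose s : ℝ) / (n'.choose s : ℝ))) * c
      = ((N' : ℝ) * pbar * (n.choose s : ℝ) + (N' : ℝ) * ((K1 : ℝ) - (K2 : ℝ)))
          / (n'.choose s : ℝ) := by
    have e1 : (s : ℝ) / (n' : ℝ) = (K1 : ℝ) / (n'.choose s : ℝ) := by
      rw [div_eq_div_iff hn'pos.ne' hC'pos.ne']
      linear_combination hid1
    have e2 : ((s : ℝ) / (n : ℝ)) * ((n.choose s : ℝ) / (n'.choose s : ℝ))
        = (K2 : ℝ) / (n'.choose s : ℝ) := by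
      rw [div_mul_div_comm,
        div_eq_div_iff (by positivity : (0:ℝ) < (n : ℝ) * (n'.choose s : ℝ)).ne' hC'pos.ne']
      linear_combination (n'.choose s : ℝ) * hid2
    rw [e1, e2]
    have hc0 : (c : ℝ) ≠ 0 := hcpos.ne'
    have hC0 : ((n'.choose s : ℕ) : ℝ) ≠ 0 := hC'pos.ne'
    field_simp
    ring
  have hmc : m * c ≤ ((N' : ℝ) / (c : ℝ)) *
      (pbar * ((n.choose s : ℝ) / (n'.choose s : ℝ)) + (s : ℝ) / (n' : ℝ)
        - ((s : ℝ) / (n : ℝ)) * ((n.choose s : ℝ) / (n'.choose s : ℝ))) * c := by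
    rw [hrhs]
    calc m * c ≤ (∑ Z ∈ B, G Z) / (n'.choose s : ℝ) := hminavg
      _ ≤ _ := by gcongr
  exact le_of_mul_le_mul_right hmc hcpos
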